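/- Let d ≥ 3 be an integer and let z be a real number with 0 < z < 1. Then ((d−1)/2) · B(z; 1/2, d/2) + z^{−1/2}(1−z)^{d/2} = z^{−1/2}(1−z)^{d/2} · ₂F₁(1, (d−1)/2; 1/2; z). -/

import Mathlib

open Real MeasureTheory

/-- The Pochhammer symbol `(a)_n = a(a+1)⋯(a+n−1)`, with `(a)_0 = 1`. -/
noncomputable def poch (a : ℝ) (n : ℕ) : ℝ := ∏ i ∈ Finset.range n, (a + i)

/-- The Gauss hypergeometric function `₂F₁(a,b;c;z) = Σₙ ((a)ₙ(b)ₙ/(c)ₙ) zⁿ/n!`. -/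
noncomputable def hyp2F1 (a b c z : ℝ) : ℝ :=
  ∑' n : ℕ, poch a n * poch b n / poch c n * z ^ n / (n.factorial : ℝ)

/-- The incomplete Beta function `B(z; a, b) = ∫₀^z t^{a−1}(1−t)^{b−1} dt`. -/
noncomputable def incBeta (z a b : ℝ) : ℝ := ∫ t in (0:ℝ)..z, t ^ (a - 1) * (1 - t) ^ (b - 1)

open intervalIntegral

lemma poch_succ (a : ℝ) (n : ℕ) : poch a (n+1) = poch a n * (a + n) :=
  Finset.prod_range_succ _ _

lemma poch_pos {a : ℝ} (ha : 0 < a) (n : ℕ) : 0 < poch a n :=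
  Finset.prod_pos fun i _ => by positivity

lemma poch_one_eq (n : ℕ) : poch 1 n = n.factorial := by
  induction n with
  | zero => simp [poch]
  | succ n ih =>
    rw [poch_succ, ih, Nat.factorial_succ]
    push_cast
    ring

/-- The coefficient ratio `(b)_n / (1/2)_n`. -/
noncomputable def cRatio (b : ℝ) (n : ℕ) : ℝ := poch b n / poch (1/2) n

lemma cRatio_pos {b : ℝ} (hb : 0 < b) (n : ℕ) : 0 < cRatio b n :=
  div_pos (poch_pos hb n) (poch_pos (by norm_num) n)

lemma cRatio_zero (b : ℝ) : cRatio b 0 = 1 := by simp [cRatio, poch]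

lemma cRatio_succ {b : ℝ} (hb : 0 < b) (n : ℕ) :
    cRatio b (n+1) = cRatio b n * ((b + n) / (1/2 + n)) := by
  have h1 : poch (1/2) n ≠ 0 := (poch_pos (by norm_num) n).ne'
  have h2 : (1/2 + (n:ℝ)) ≠ 0 := by positivity
  rw [cRatio, cRatio, poch_succ, poch_succ]
  field_simp

/-- Integrability of `t^p (1-t)^(q-1)` on `[0,z]` for `p > -1`, `0 < z < 1`. -/
lemma intInt (z p q : ℝ) (h0 : 0 < z) (h1 : z < 1) (hp : -1 < p) :
    IntervalIntegrable (fun t => t ^ p * (1 - t) ^ (q - 1)) volume 0 z := by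
  apply (intervalIntegrable_rpow' hp).mul_continuousOn
  apply ContinuousOn.rpow_const (continuousOn_const.sub continuousOn_id)
  rw [Set.uIcc_of_le h0.le]
  intro x hx
  left
  have hx2 : x ≤ z := hx.2
  have : (0:ℝ) < 1 - x := by linarith
  exact this.ne'

/-- Integration by parts step. -/
lemma ibp (z p q : ℝ) (h0 : 0 < z) (h1 : z < 1) (hp : -1 < p) (hq : 0 < q) :
    (p + 1) * ∫ t in (0:ℝ)..z, t ^ p * (1 - t) ^ (q - 1)
      = z ^ (p + 1) * (1 - z) ^ q
        + (p + 1 + q) * ∫ t in (0:ℝ)..z, t ^ (p + 1) * (1 - t) ^ (q - 1) := by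
  have hp1 : (0:ℝ) < p + 1 := by linarith
  set f : ℝ → ℝ := fun t => t ^ (p+1) * (1-t) ^ q with hf
  set f' : ℝ → ℝ := fun t =>
    (p+1) * (t ^ p * (1-t) ^ (q-1)) - (p+1+q) * (t ^ (p+1) * (1-t) ^ (q-1)) with hf'
  have hcont : ContinuousOn f (Set.Icc 0 z) := by
    apply ContinuousOn.mul
    · exact continuousOn_id.rpow_const fun x _ => Or.inr hp1.le
    · apply ContinuousOn.rpow_const (continuousOn_const.sub continuousOn_id)
      intro x hx
      left
      have hx2 : x ≤ z := hx.2
      have : (0:ℝ) < 1 - x := by linarith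
      exact this.ne'
  have hderiv : ∀ x ∈ Set.Ioo (0:ℝ) z, HasDerivWithinAt f (f' x) (Set.Ioi x) x := by
    intro x hx
    have hx0 : (0:ℝ) < x := hx.1
    have hx1 : x < 1 := hx.2.trans h1
    have h1x : (0:ℝ) < 1 - x := by linarith
    have d1 : HasDerivAt (fun t : ℝ => t ^ (p+1)) ((p+1) * x ^ p) x := by
      have := Real.hasDerivAt_rpow_const (x := x) (p := p+1) (Or.inl hx0.ne')
      simpa using this
    have d2 : HasDerivAt (fun t : ℝ => (1-t) ^ q) (-(q * (1-x) ^ (q-1))) x := by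
      have hid : HasDerivAt (fun t : ℝ => 1 - t) (-1) x := by
        simpa using (hasDerivAt_id' x).const_sub (1:ℝ)
      have := hid.rpow_const (p := q) (Or.inl h1x.ne')
      simpa using this
    have dmul := d1.mul d2
    have e1 : (1-x) ^ q = (1-x) ^ (q-1) * (1-x) := by
      have h := Real.rpow_add h1x (q-1) 1
      rw [Real.rpow_one] at h
      rw [← h]
      ring_nf
    have e2 : x ^ (p+1) = x ^ p * x := by
      have h := Real.rpow_add hx0 p 1
      rw [Real.rpow_one] at h
      exact h
    have key : (p+1) * x ^ p * (1-x) ^ q + x ^ (p+1) * -(q * (1-x) ^ (q-1)) = f' x := by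
      rw [hf']
      simp only
      rw [e1, e2]
      ring
    rw [← key]
    exact dmul.hasDerivWithinAt
  have hint : IntervalIntegrable f' volume 0 z := by
    apply IntervalIntegrable.sub
    · exact (intInt z p q h0 h1 hp).const_mul _
    · exact (intInt z (p+1) q h0 h1 (by linarith)).const_mul _
  have hFTC := intervalIntegral.integral_eq_sub_of_hasDeriv_right_of_le h0.le hcont hderiv hint
  have hsplit : ∫ t in (0:ℝ)..z, f' t
      = (p+1) * (∫ t in (0:ℝ)..z, t ^ p * (1-t) ^ (q-1))
        - (p+1+q) * ∫ t in (0:ℝ)..z, t ^ (p+1) * (1-t) ^ (q-1) := by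
    rw [hf']
    rw [intervalIntegral.integral_sub ((intInt z p q h0 h1 hp).const_mul _)
      ((intInt z (p+1) q h0 h1 (by linarith)).const_mul _),
      intervalIntegral.integral_const_mul, intervalIntegral.integral_const_mul]
  have hf0 : f 0 = 0 := by
    simp [hf, Real.zero_rpow hp1.ne']
  rw [hsplit, hf0, sub_zero] at hFTC
  simp only [hf] at hFTC
  linarith [hFTC]

/-- For an integer `d ≥ 3` and `0 < z < 1`,
`((d−1)/2) B(z; 1/2, d/2) + z^{−1/2}(1−z)^{d/2}
  = z^{−1/2}(1−z)^{d/2} ₂F₁(1, (d−1)/2; 1/2; z)`. -/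
theorem incBeta_hyp2F1_identity (d : ℕ) (hd : 3 ≤ d) (z : ℝ) (h0 : 0 < z) (h1 : z < 1) :
    (((d:ℝ) - 1)/2) * incBeta z (1/2) ((d:ℝ)/2)
        + z ^ (-(1:ℝ)/2) * (1 - z) ^ ((d:ℝ)/2)
      = z ^ (-(1:ℝ)/2) * (1 - z) ^ ((d:ℝ)/2)
        * hyp2F1 1 (((d:ℝ) - 1)/2) (1/2) z := by
  have hd3 : (3:ℝ) ≤ (d:ℝ) := by exact_mod_cast hd
  set b : ℝ := ((d:ℝ) - 1)/2 with hbdef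
  have hb : 1 ≤ b := by rw [hbdef]; linarith
  have hb0 : 0 < b := by linarith
  set q : ℝ := (d:ℝ)/2 with hqdef
  have hq : 0 < q := by rw [hqdef]; linarith
  set c : ℕ → ℝ := cRatio b with hcdef
  set w : ℝ := z ^ (-(1:ℝ)/2) * (1 - z) ^ q with hwdef
  -- The summand
  set f : ℕ → ℝ := fun n => c n * z ^ n with hfdef
  have hfpos : ∀ n, 0 < f n := fun n => mul_pos (cRatio_pos hb0 n) (pow_pos h0 n)
  -- Summability via ratio test
  have hsum : Summable f := by
    apply summable_of_ratio_norm_eventually_le (r := (1+z)/2) (by linarith)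
    have htend : Filter.Tendsto (fun n : ℕ => z * ((b + n) / (1/2 + n))) Filter.atTop
        (nhds z) := by
      have h1' : Filter.Tendsto (fun n : ℕ => ((1:ℝ)/2 + n)⁻¹) Filter.atTop (nhds 0) := by
        apply Filter.Tendsto.comp tendsto_inv_atTop_zero
        exact Filter.tendsto_atTop_add_const_left _ _ tendsto_natCast_atTop_atTop
      have h2' : Filter.Tendsto (fun n : ℕ => 1 + (b - 1/2) * ((1:ℝ)/2 + n)⁻¹)
          Filter.atTop (nhds 1) := by
        have := (h1'.const_mul (b - 1/2)).const_add 1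
        simpa using this
      have heq : ∀ n : ℕ, (b + n) / (1/2 + n) = 1 + (b - 1/2) * ((1:ℝ)/2 + n)⁻¹ := by
        intro n
        have hne : ((1:ℝ)/2 + n) ≠ 0 := by positivity
        field_simp
        ring
      have h3' : Filter.Tendsto (fun n : ℕ => (b + (n:ℝ)) / (1/2 + n)) Filter.atTop
          (nhds 1) := by
        simp_rw [heq]; exact h2'
      simpa using h3'.const_mul z
    have hev := htend.eventually_lt_const (show z < (1+z)/2 by linarith)
    filter_upwards [hev] with n hn
    have hfn : f (n+1) = f n * (z * ((b + n) / (1/2 + n))) := by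
      rw [hfdef]
      simp only
      rw [hcdef, cRatio_succ hb0, pow_succ]
      ring
    rw [hfn, Real.norm_eq_abs, Real.norm_eq_abs, abs_of_pos (hfpos n),
      abs_of_pos]
    · rw [mul_comm ((1+z)/2) (f n)]
      exact mul_le_mul_of_nonneg_left hn.le (hfpos n).le
    · have hr : 0 < z * ((b + n) / (1/2 + n)) := by positivity
      exact mul_pos (hfpos n) hr
  -- The key integrals
  set J : ℕ → ℝ := fun N => ∫ t in (0:ℝ)..z, t ^ ((N:ℝ) - 1/2) * (1 - t) ^ (q - 1)
    with hJdef
  have hJrec : ∀ N : ℕ, ((N:ℝ) + 1/2) * J N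
      = z ^ ((N:ℝ) + 1/2) * (1 - z) ^ q + ((N:ℝ) + 1/2 + q) * J (N+1) := by
    intro N
    have hNnn : (0:ℝ) ≤ (N:ℝ) := Nat.cast_nonneg N
    have this1 := ibp z ((N:ℝ) - 1/2) q h0 h1 (by linarith) hq
    have hA : (N:ℝ) - 1/2 + 1 = ((N+1:ℕ):ℝ) - 1/2 := by push_cast; ring
    have hB : ((N+1:ℕ):ℝ) - 1/2 = (N:ℝ) + 1/2 := by push_cast; ring
    rw [hA] at this1
    rw [← hB]
    simp only [hJdef]
    exact this1
  -- The main induction identity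
  have main : ∀ N : ℕ, b * incBeta z (1/2) q
      = w * (∑ n ∈ Finset.range N, c (n+1) * z ^ (n+1))
        + c (N+1) * ((N:ℝ) + 1/2) * J N := by
    intro N
    induction N with
    | zero =>
      simp only [Finset.range_zero, Finset.sum_empty, mul_zero, zero_add, Nat.cast_zero]
      have hc1 : c 1 = 2 * b := by
        rw [hcdef, cRatio, poch, poch]
        simp [Finset.prod_range_one]
        ring
      have hexp : ((1:ℝ)/2 - 1) = ((0:ℕ):ℝ) - 1/2 := by norm_num
      rw [incBeta, hexp, hc1]
      simp only [hJdef, Nat.cast_zero]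
      ring
    | succ N ih =>
      have hrec := hJrec N
      have hbq : b + ((N:ℝ)+1) = (N:ℝ) + 1/2 + q := by
        rw [hbdef, hqdef]; push_cast; ring
      have hc2 : c (N+2) * (((N:ℝ)+1) + 1/2) = c (N+1) * ((N:ℝ) + 1/2 + q) := by
        have hcs : cRatio b (N+2) = cRatio b (N+1) * ((b + ((N:ℝ)+1)) / (1/2 + ((N:ℝ)+1))) := by
          have h := cRatio_succ hb0 (N+1)
          push_cast at h
          exact h
        have hne : (1/2 + ((N:ℝ)+1)) ≠ 0 := by positivity
        rw [hcdef, hcs, hbq]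
        field_simp
        ring
      have hzpow : z ^ ((N:ℝ) + 1/2) = z ^ (-(1:ℝ)/2) * z ^ (N+1 : ℕ) := by
        rw [← Real.rpow_natCast z (N+1), ← Real.rpow_add h0]
        congr 1
        push_cast
        ring
      rw [Finset.sum_range_succ]
      push_cast
      push_cast at ih hc2
      linear_combination ih + c (N+1) * hrec - J (N+1) * hc2
        + c (N+1) * (1-z) ^ q * hzpow - c (N+1) * z ^ (N+1) * hwdef
  -- Bounds on the remainder
  have hJnonneg : ∀ N : ℕ, 0 ≤ J N := by
    intro N
    apply intervalIntegral.integral_nonneg h0.le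
    intro t ht
    have h1t : 0 ≤ 1 - t := by
      have := ht.2; nlinarith
    exact mul_nonneg (Real.rpow_nonneg ht.1 _) (Real.rpow_nonneg h1t _)
  have hJle : ∀ N : ℕ, J N ≤ z ^ ((N:ℝ) + 1/2) / ((N:ℝ) + 1/2) := by
    intro N
    have hpN : (-1:ℝ) < (N:ℝ) - 1/2 := by
      have : (0:ℝ) ≤ N := Nat.cast_nonneg N
      linarith
    have hmono : J N ≤ ∫ t in (0:ℝ)..z, t ^ ((N:ℝ) - 1/2) := by
      apply intervalIntegral.integral_mono_on h0.le (intInt z _ q h0 h1 hpN)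
        (intervalIntegrable_rpow' hpN)
      intro t ht
      have h1t : 0 ≤ 1 - t := by have := ht.2; nlinarith
      have h1t' : 1 - t ≤ 1 := by have := ht.1; linarith
      calc t ^ ((N:ℝ) - 1/2) * (1-t) ^ (q-1)
          ≤ t ^ ((N:ℝ) - 1/2) * 1 := by
            apply mul_le_mul_of_nonneg_left _ (Real.rpow_nonneg ht.1 _)
            exact Real.rpow_le_one h1t h1t' (by linarith)
        _ = t ^ ((N:ℝ) - 1/2) := mul_one _
    have hNpos' : (0:ℝ) < (N:ℝ) + 1/2 := by positivity
    have hval : ∫ t in (0:ℝ)..z, t ^ ((N:ℝ) - 1/2)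
        = z ^ ((N:ℝ) + 1/2) / ((N:ℝ) + 1/2) := by
      have hE : (N:ℝ) - 1/2 + 1 = (N:ℝ) + 1/2 := by ring
      rw [integral_rpow (Or.inl hpN), hE, Real.zero_rpow (ne_of_gt hNpos'), sub_zero]
    rw [hval] at hmono
    exact hmono
  -- Remainder tends to zero
  set R : ℕ → ℝ := fun N => c (N+1) * ((N:ℝ) + 1/2) * J N with hRdef
  have hRnonneg : ∀ N, 0 ≤ R N := by
    intro N
    apply mul_nonneg (mul_nonneg (cRatio_pos hb0 _).le (by positivity)) (hJnonneg N)
  have hRle : ∀ N, R N ≤ f (N+1) * z ^ (-(1:ℝ)/2) := by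
    intro N
    have hNpos : (0:ℝ) < (N:ℝ) + 1/2 := by positivity
    have h1' : R N ≤ c (N+1) * ((N:ℝ) + 1/2) * (z ^ ((N:ℝ) + 1/2) / ((N:ℝ) + 1/2)) := by
      apply mul_le_mul_of_nonneg_left (hJle N)
      exact mul_nonneg (cRatio_pos hb0 _).le hNpos.le
    have h2' : c (N+1) * ((N:ℝ) + 1/2) * (z ^ ((N:ℝ) + 1/2) / ((N:ℝ) + 1/2))
        = c (N+1) * z ^ ((N:ℝ) + 1/2) := by field_simp
    have h3' : z ^ ((N:ℝ) + 1/2) = z ^ (N+1:ℕ) * z ^ (-(1:ℝ)/2) := by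
      rw [← Real.rpow_natCast z (N+1), ← Real.rpow_add h0]
      congr 1
      push_cast
      ring
    rw [h2', h3'] at h1'
    rw [hfdef]
    simp only
    linarith [h1']
  have hftend : Filter.Tendsto (fun N : ℕ => f (N+1) * z ^ (-(1:ℝ)/2)) Filter.atTop
      (nhds 0) := by
    have h0' : Filter.Tendsto f Filter.atTop (nhds 0) := hsum.tendsto_atTop_zero
    have h1' : Filter.Tendsto (fun N : ℕ => f (N+1)) Filter.atTop (nhds 0) :=
      h0'.comp (Filter.tendsto_add_atTop_nat 1)
    simpa using h1'.mul_const (z ^ (-(1:ℝ)/2))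
  have hRtend : Filter.Tendsto R Filter.atTop (nhds 0) :=
    squeeze_zero hRnonneg hRle hftend
  -- Partial sums tend to the tail sum
  set S : ℝ := ∑' n : ℕ, f (n+1) with hSdef
  have hsum' : Summable (fun n => f (n+1)) := (summable_nat_add_iff 1).mpr hsum
  have hStend : Filter.Tendsto (fun N : ℕ => ∑ n ∈ Finset.range N, f (n+1))
      Filter.atTop (nhds S) := hsum'.hasSum.tendsto_sum_nat
  -- Identify the limits
  have hPeq : ∀ N : ℕ, w * (∑ n ∈ Finset.range N, f (n+1)) = b * incBeta z (1/2) q - R N := by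
    intro N
    have hm := main N
    rw [hRdef]
    simp only
    have hfc : ∀ n ∈ Finset.range N, f (n+1) = c (n+1) * z ^ (n+1) := by
      intro n _; rw [hfdef]
    rw [Finset.sum_congr rfl hfc]
    linarith [hm]
  have hlim1 : Filter.Tendsto (fun N : ℕ => w * (∑ n ∈ Finset.range N, f (n+1)))
      Filter.atTop (nhds (w * S)) := hStend.const_mul w
  have hlim2 : Filter.Tendsto (fun N : ℕ => b * incBeta z (1/2) q - R N)
      Filter.atTop (nhds (b * incBeta z (1/2) q - 0)) :=
    (tendsto_const_nhds).sub hRtend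
  have hkey : w * S = b * incBeta z (1/2) q - 0 := by
    apply tendsto_nhds_unique _ hlim2
    have heq2 : (fun N : ℕ => b * incBeta z (1/2) q - R N)
        = fun N : ℕ => w * (∑ n ∈ Finset.range N, f (n+1)) := by
      funext N; rw [hPeq N]
    rw [heq2]
    exact hlim1
  rw [sub_zero] at hkey
  -- Rewrite the hypergeometric function
  have hhyp : hyp2F1 1 b (1/2) z = ∑' n : ℕ, f n := by
    rw [hyp2F1]
    apply tsum_congr
    intro n
    have hfact : (n.factorial : ℝ) ≠ 0 := Nat.cast_ne_zero.mpr n.factorial_ne_zero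
    have hpo : poch (1/2) n ≠ 0 := (poch_pos (by norm_num) n).ne'
    rw [poch_one_eq, hfdef]
    simp only [hcdef, cRatio]
    field_simp
  have htsum : ∑' n : ℕ, f n = 1 + S := by
    rw [Summable.tsum_eq_zero_add hsum, hSdef]
    congr 1
    rw [hfdef]
    simp [hcdef, cRatio_zero]
  -- Conclude
  rw [hhyp, htsum]
  rw [mul_add, mul_one]
  linarith [hkey]
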